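/- Let g₁, …, g_t be polyexponential functions with bases contained in a finite set L ⊆ ℂ, let m₁, …, m_t be positive integers, and let S be the least common multiple of m₁, …, m_t. Then the weighted convolution (g₁ * g₂ * ··· * g_t)_{m⃗}(k) = Σ g₁(k₁)···g_t(k_t), summed over all t-tuples of non-negative integers (k₁, …, k_t) with m₁k₁ + ··· + m_tk_t = k, is a mod-S polyexponential whose bases lie in the union over i = 1, …, t of the sets L^{S/m_i} = {ℓ^{S/m_i} : ℓ ∈ L}. -/

import Mathlib

/-- `g` is polyexponential with bases in the finite set `L`:
`g(k) = Σ_{c∈L} p_c(k) c^k` for some polynomials `p_c`. -/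
def IsPolyexp (L : Finset ℂ) (g : ℕ → ℂ) : Prop :=
  ∃ p : ℂ → Polynomial ℂ, ∀ k : ℕ, g k = ∑ c ∈ L, (p c).eval (k : ℂ) * c ^ k

/-- `g : ℕ → ℂ` is a mod-`S` polyexponential of base `ℓ`: there are `K ∈ ℕ` and
polynomials `q₀, …, q_{S−1}` such that for every `k ≥ K`, writing `k = jS + i` with
`0 ≤ i ≤ S−1` (so `j = k / S` and `i = k % S`), one has `g(k) = q_i(j) ℓ^j`. -/
def IsModPolyexp (S : ℕ) (ℓ : ℂ) (g : ℕ → ℂ) : Prop :=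
  ∃ (K : ℕ) (q : ℕ → Polynomial ℂ), ∀ k : ℕ, K ≤ k →
    g k = (q (k % S)).eval ((k / S : ℕ) : ℂ) * ℓ ^ (k / S)

open Classical in
/-- The weighted convolution `(g₁ * ··· * g_t)_{m⃗}(k)`: the sum of `g₁(k₁)···g_t(k_t)`
over all `t`-tuples of non-negative integers with `m₁k₁ + ··· + m_tk_t = k`.
(When every `m i ≥ 1`, every such tuple has all entries at most `k`.) -/
noncomputable def weightedConv (t : ℕ) (g : Fin t → ℕ → ℂ) (m : Fin t → ℕ)
    (k : ℕ) : ℂ :=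
  ∑ v ∈ (Fintype.piFinset fun _ : Fin t => Finset.range (k + 1)).filter
      (fun v : Fin t → ℕ => ∑ i, m i * v i = k),
    ∏ i, g i (v i)

open Polynomial Finset
set_option maxHeartbeats 1000000
/-- Discrete "resolvent": for any `c` one can solve `r(x+1) - c r(x) = w(x)`. -/
lemma solve_poly (c : ℂ) : ∀ (d : ℕ) (w : Polynomial ℂ), w.natDegree ≤ d →
    ∃ r : Polynomial ℂ, ∀ x : ℂ, r.eval (x + 1) - c * r.eval x = w.eval x := by
  intro d
  induction d with
  | zero =>
    intro w hw
    have hw' : w = C (w.coeff 0) := Polynomial.eq_C_of_natDegree_le_zero hw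
    by_cases hc : c = 1
    · refine ⟨C (w.coeff 0) * X, fun x => ?_⟩
      subst hc; rw [hw']; simp; ring
    · refine ⟨C (w.coeff 0 / (1 - c)), fun x => ?_⟩
      rw [hw']; simp
      field_simp [sub_ne_zero.2 (Ne.symm hc)]
  | succ d ih =>
    intro w hw
    set a := w.coeff (d + 1) with ha
    by_cases hc : c = 1
    · subst hc
      set r₀ : Polynomial ℂ := C (a / (d + 2)) * X ^ (d + 2) with hr₀
      set Tr₀ : Polynomial ℂ := r₀.comp (X + C 1) - 1 * r₀ with hT
      have hd2 : ((d : ℂ) + 2) ≠ 0 := by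
        have h := Nat.cast_ne_zero (R := ℂ).mpr (show d + 2 ≠ 0 by omega)
        push_cast at h; exact h
      have hTco : ∀ m, d + 1 ≤ m → Tr₀.coeff m = (if m = d + 1 then a else 0) := by
        intro m hm
        rw [hT, hr₀]
        simp only [Polynomial.sub_comp, Polynomial.mul_comp, Polynomial.C_comp,
          Polynomial.pow_comp, Polynomial.X_comp, one_mul, Polynomial.coeff_sub,
          Polynomial.coeff_C_mul, Polynomial.coeff_X_pow, Polynomial.C_1]
        rw [Polynomial.coeff_X_add_one_pow]
        rcases lt_trichotomy m (d + 2) with h | h | h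
        · have hm1 : m = d + 1 := by omega
          subst hm1
          rw [if_neg (by omega : ¬ d + 1 = d + 2), if_pos rfl, Nat.choose_succ_self_right]
          push_cast
          rw [mul_zero, sub_zero, show ((d:ℂ) + 1 + 1) = (d:ℂ) + 2 by ring]
          exact div_mul_cancel₀ a hd2
        · subst h
          rw [if_pos rfl, if_neg (by omega : ¬ d + 2 = d + 1), Nat.choose_self]
          push_cast; ring
        · rw [if_neg (by omega), if_neg (by omega), Nat.choose_eq_zero_of_lt h]
          push_cast; ring
      have hw2 : (w - Tr₀).natDegree ≤ d := by
        rw [Polynomial.natDegree_le_iff_coeff_eq_zero]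
        intro m hm
        rw [Polynomial.coeff_sub, hTco m (by omega)]
        by_cases hmd : m = d + 1
        · subst hmd; simp [ha]
        · rw [if_neg hmd, Polynomial.coeff_eq_zero_of_natDegree_lt (by omega)]
          ring
      obtain ⟨r', hr'⟩ := ih (w - Tr₀) hw2
      refine ⟨r₀ + r', fun x => ?_⟩
      have h1 : Tr₀.eval x = r₀.eval (x + 1) - 1 * r₀.eval x := by
        rw [hT]; simp [Polynomial.eval_comp]
      have h2 := hr' x
      rw [Polynomial.eval_sub, h1] at h2
      simp only [Polynomial.eval_add]
      linear_combination h2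
    · set r₀ : Polynomial ℂ := C (a / (1 - c)) * X ^ (d + 1) with hr₀
      set Tr₀ : Polynomial ℂ := r₀.comp (X + C 1) - C c * r₀ with hT
      have hc' : (1 : ℂ) - c ≠ 0 := sub_ne_zero.2 (Ne.symm hc)
      have hTco : ∀ m, d + 1 ≤ m → Tr₀.coeff m = (if m = d + 1 then a else 0) := by
        intro m hm
        rw [hT, hr₀]
        simp only [Polynomial.sub_comp, Polynomial.mul_comp, Polynomial.C_comp,
          Polynomial.pow_comp, Polynomial.X_comp, Polynomial.coeff_sub,
          Polynomial.coeff_C_mul, Polynomial.coeff_X_pow, Polynomial.C_1]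
        rw [Polynomial.coeff_X_add_one_pow]
        rcases eq_or_lt_of_le hm with h | h
        · rw [← h, if_pos rfl, if_pos rfl, Nat.choose_self]
          push_cast
          field_simp
        · rw [if_neg (by omega), if_neg (by omega), Nat.choose_eq_zero_of_lt h]
          push_cast; ring
      have hw2 : (w - Tr₀).natDegree ≤ d := by
        rw [Polynomial.natDegree_le_iff_coeff_eq_zero]
        intro m hm
        rw [Polynomial.coeff_sub, hTco m (by omega)]
        by_cases hmd : m = d + 1
        · subst hmd; simp [ha]
        · rw [if_neg hmd, Polynomial.coeff_eq_zero_of_natDegree_lt (by omega)]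
          ring
      obtain ⟨r', hr'⟩ := ih (w - Tr₀) hw2
      refine ⟨r₀ + r', fun x => ?_⟩
      have h1 : Tr₀.eval x = r₀.eval (x + 1) - c * r₀.eval x := by
        rw [hT]; simp [Polynomial.eval_comp]
      have h2 := hr' x
      rw [Polynomial.eval_sub, h1] at h2
      simp only [Polynomial.eval_add]
      linear_combination h2

/-- Solving `F(n+1) = γ F(n) + w(n) β^n` with `β ≠ 0`. -/
lemma solve_rec (β γ : ℂ) (hβ : β ≠ 0) (F : ℕ → ℂ) (w : Polynomial ℂ)
    (hF : ∀ n : ℕ, F (n + 1) = γ * F n + w.eval (n : ℂ) * β ^ n) :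
    ∃ r s : Polynomial ℂ, ∀ n : ℕ,
      F n = r.eval (n : ℂ) * β ^ n + s.eval (n : ℂ) * γ ^ n := by
  obtain ⟨r, hr⟩ := solve_poly (γ / β) (C β⁻¹ * w).natDegree (C β⁻¹ * w) le_rfl
  refine ⟨r, C (F 0 - r.eval 0), fun n => ?_⟩
  induction n with
  | zero => simp
  | succ n ihn =>
    have h1 := hr (n : ℂ)
    rw [Polynomial.eval_mul, Polynomial.eval_C] at h1
    rw [hF n, ihn]
    push_cast
    simp only [Polynomial.eval_C]
    have h2 : r.eval ((n : ℂ) + 1) * β = γ * r.eval (n : ℂ) + w.eval (n : ℂ) := by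
      field_simp at h1
      linear_combination h1
    rw [pow_succ, pow_succ]
    linear_combination (-β ^ n) * h2
/-- Solving `F(n+1) = γ F(n) + w(n) β^n + z(n) γ^n` with `β, γ ≠ 0`. -/
lemma solve_rec2 (β γ : ℂ) (hβ : β ≠ 0) (hγ : γ ≠ 0) (F : ℕ → ℂ) (w z : Polynomial ℂ)
    (hF : ∀ n : ℕ, F (n + 1) = γ * F n + w.eval (n : ℂ) * β ^ n + z.eval (n : ℂ) * γ ^ n) :
    ∃ r s : Polynomial ℂ, ∀ n : ℕ,
      F n = r.eval (n : ℂ) * β ^ n + s.eval (n : ℂ) * γ ^ n := by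
  set F₁ : ℕ → ℂ := fun n => Nat.rec (F 0) (fun n x => γ * x + w.eval (n : ℂ) * β ^ n) n with hF₁
  have hF₁rec : ∀ n : ℕ, F₁ (n + 1) = γ * F₁ n + w.eval (n : ℂ) * β ^ n := fun n => rfl
  obtain ⟨r₁, s₁, h₁⟩ := solve_rec β γ hβ F₁ w hF₁rec
  have hF₂rec : ∀ n : ℕ, (F (n+1) - F₁ (n+1)) = γ * (F n - F₁ n) + z.eval (n : ℂ) * γ ^ n := by
    intro n; rw [hF n, hF₁rec n]; ring
  obtain ⟨r₂, s₂, h₂⟩ := solve_rec γ γ hγ (fun n => F n - F₁ n) z hF₂rec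
  refine ⟨r₁, s₁ + (r₂ + s₂), fun n => ?_⟩
  have := h₂ n
  simp only [Polynomial.eval_add]
  have hFn : F n = F₁ n + (F n - F₁ n) := by ring
  rw [hFn, this, h₁ n]
  ring

noncomputable def cF (β γ : ℂ) (p q : Polynomial ℂ) (n : ℕ) : ℂ :=
  ∑ a ∈ Finset.range (n + 1),
    p.eval (a : ℂ) * β ^ a * (q.eval (((n - a : ℕ)) : ℂ) * γ ^ (n - a))

lemma cF_rec (β γ : ℂ) (p q : Polynomial ℂ) (n : ℕ) :
    cF β γ p q (n + 1) = γ * cF β γ p q n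
      + (q.eval 0 * p.eval ((n : ℂ) + 1)) * β ^ (n + 1)
      + γ * cF β γ p (q.comp (X + C 1) - q) n := by
  unfold cF
  rw [Finset.sum_range_succ]
  have h1 : ∀ a ∈ Finset.range (n + 1),
      p.eval (a : ℂ) * β ^ a * (q.eval (((n + 1 - a : ℕ)) : ℂ) * γ ^ (n + 1 - a)) =
      γ * (p.eval (a : ℂ) * β ^ a * (q.eval (((n - a : ℕ)) : ℂ) * γ ^ (n - a)))
      + γ * (p.eval (a : ℂ) * β ^ a *
          ((q.comp (X + C 1) - q).eval (((n - a : ℕ)) : ℂ) * γ ^ (n - a))) := by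
    intro a ha
    rw [Finset.mem_range] at ha
    have h2 : n + 1 - a = (n - a) + 1 := by omega
    rw [h2]
    push_cast
    rw [pow_succ]
    simp only [Polynomial.eval_sub, Polynomial.eval_comp, Polynomial.eval_add,
      Polynomial.eval_X, Polynomial.eval_C]
    ring
  rw [Finset.sum_congr rfl h1, Finset.sum_add_distrib, ← Finset.mul_sum, ← Finset.mul_sum]
  have h3 : ((n + 1 - (n + 1) : ℕ) : ℂ) = 0 := by norm_num
  rw [h3, Nat.sub_self, pow_zero]
  push_cast
  ring

lemma conv_polyexp (β γ : ℂ) (p q : Polynomial ℂ) :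
    ∃ r s : Polynomial ℂ, ∀ n : ℕ,
      cF β γ p q n = r.eval (n : ℂ) * β ^ n + s.eval (n : ℂ) * γ ^ n := by
  by_cases hβ : β = 0
  · refine ⟨0, C (p.eval 0) * q, fun n => ?_⟩
    unfold cF
    rw [Finset.sum_eq_single_of_mem 0 (Finset.mem_range.2 (by omega))]
    · subst hβ; simp; ring
    · intro b hb hb0
      subst hβ
      rw [zero_pow hb0]
      ring
  by_cases hγ : γ = 0
  · refine ⟨C (q.eval 0) * p, 0, fun n => ?_⟩
    unfold cF
    rw [Finset.sum_eq_single_of_mem n (Finset.mem_range.2 (by omega))]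
    · subst hγ; simp; ring
    · intro b hb hb0
      subst hγ
      rw [Finset.mem_range] at hb
      rw [zero_pow (show n - b ≠ 0 by omega)]
      ring
  -- main case
  suffices h : ∀ (d : ℕ) (q : Polynomial ℂ), q.natDegree ≤ d → ∀ p : Polynomial ℂ,
      ∃ r s : Polynomial ℂ, ∀ n : ℕ,
        cF β γ p q n = r.eval (n : ℂ) * β ^ n + s.eval (n : ℂ) * γ ^ n by
    exact h q.natDegree q le_rfl p
  intro d
  induction d with
  | zero =>
    intro q hq p
    have hqC : q = C (q.coeff 0) := Polynomial.eq_C_of_natDegree_le_zero hq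
    have hΔ : q.comp (X + C 1) - q = 0 := by rw [hqC]; simp
    have hrec : ∀ n : ℕ, cF β γ p q (n + 1) = γ * cF β γ p q n +
        (C (q.eval 0) * C β * (p.comp (X + C 1))).eval (n : ℂ) * β ^ n := by
      intro n
      rw [cF_rec, hΔ]
      have : cF β γ p 0 n = 0 := by unfold cF; simp
      rw [this]
      simp only [Polynomial.eval_mul, Polynomial.eval_C, Polynomial.eval_comp,
        Polynomial.eval_add, Polynomial.eval_X]
      rw [pow_succ]
      ring
    exact solve_rec β γ hβ _ _ hrec
  | succ d ih =>
    intro q hq p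
    set Δq := q.comp (X + C 1) - q with hΔq
    have hΔdeg : Δq.natDegree ≤ d := by
      by_cases hΔ0 : Δq = 0
      · rw [hΔ0]; simp
      have hq0 : q ≠ 0 := by
        intro h; apply hΔ0; rw [hΔq, h]; simp
      by_cases hqd : q.natDegree = 0
      · exfalso; apply hΔ0
        rw [hΔq, Polynomial.eq_C_of_natDegree_le_zero hqd.le]; simp
      have hcompdeg : (q.comp (X + C 1)).natDegree = q.natDegree := by
        rw [Polynomial.natDegree_comp, Polynomial.natDegree_X_add_C, mul_one]
      have hcomp0 : q.comp (X + C 1) ≠ 0 := by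
        intro h
        rw [h, Polynomial.natDegree_zero] at hcompdeg
        exact hqd hcompdeg.symm
      have hlc : (q.comp (X + C 1)).leadingCoeff = q.leadingCoeff := by
        rw [Polynomial.leadingCoeff_comp (by rw [Polynomial.natDegree_X_add_C]; omega),
          (Polynomial.monic_X_add_C (1:ℂ)).leadingCoeff, one_pow, mul_one]
      have hdeg : (q.comp (X + C 1)).degree = q.degree := by
        rw [Polynomial.degree_eq_natDegree hcomp0, Polynomial.degree_eq_natDegree hq0,
          hcompdeg]
      have hlt : Δq.degree < q.degree := by
        have := Polynomial.degree_sub_lt hdeg hcomp0 hlc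
        rwa [hdeg] at this
      have := Polynomial.natDegree_lt_natDegree hΔ0 hlt
      omega
    obtain ⟨r₁, s₁, h₁⟩ := ih Δq hΔdeg p
    have hrec : ∀ n : ℕ, cF β γ p q (n + 1) = γ * cF β γ p q n +
        (C (q.eval 0) * C β * (p.comp (X + C 1)) + C γ * r₁).eval (n : ℂ) * β ^ n +
        (C γ * s₁).eval (n : ℂ) * γ ^ n := by
      intro n
      rw [cF_rec, ← hΔq, h₁ n]
      simp only [Polynomial.eval_add, Polynomial.eval_mul, Polynomial.eval_C,
        Polynomial.eval_comp, Polynomial.eval_X]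
      rw [pow_succ]
      ring
    exact solve_rec2 β γ hβ hγ _ _ _ hrec

def Good (S n : ℕ) (b : ℕ → ℂ) (g : ℕ → ℂ) : Prop :=
  ∃ K : ℕ, ∃ q : ℕ → ℕ → Polynomial ℂ, ∀ i < S, ∀ j : ℕ, K ≤ j →
    g (j * S + i) = ∑ idx ∈ Finset.range n, (q i idx).eval (j : ℂ) * (b idx) ^ j

lemma good_zero (S n : ℕ) (b : ℕ → ℂ) : Good S n b (fun _ => 0) :=
  ⟨0, fun _ _ => 0, fun i _ j _ => by simp⟩

lemma good_congr {S n : ℕ} {b g g' : ℕ → ℂ} (hS : 0 < S) (h : Good S n b g)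
    (hgg : ∃ N, ∀ k, N ≤ k → g k = g' k) : Good S n b g' := by
  obtain ⟨K, q, hq⟩ := h
  obtain ⟨N, hN⟩ := hgg
  refine ⟨K + N, q, fun i hi j hj => ?_⟩
  rw [← hN _ ?_, hq i hi j (by omega)]
  calc N ≤ j := by omega
    _ ≤ j * S := Nat.le_mul_of_pos_right j hS
    _ ≤ j * S + i := by omega

lemma good_ev_zero {S n : ℕ} {b g : ℕ → ℂ} (hS : 0 < S)
    (h : ∃ N, ∀ k, N ≤ k → g k = 0) : Good S n b g := by
  refine good_congr hS (good_zero S n b) ?_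
  obtain ⟨N, hN⟩ := h
  exact ⟨N, fun k hk => (hN k hk).symm⟩

lemma good_add {S n : ℕ} {b f g : ℕ → ℂ} (hf : Good S n b f) (hg : Good S n b g) :
    Good S n b (fun k => f k + g k) := by
  obtain ⟨K₁, q₁, h₁⟩ := hf
  obtain ⟨K₂, q₂, h₂⟩ := hg
  refine ⟨max K₁ K₂, fun i idx => q₁ i idx + q₂ i idx, fun i hi j hj => ?_⟩
  simp only [Polynomial.eval_add]
  rw [h₁ i hi j (le_of_max_le_left hj), h₂ i hi j (le_of_max_le_right hj),
    ← Finset.sum_add_distrib]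
  congr 1; ext idx; ring

lemma good_smul {S n : ℕ} {b f : ℕ → ℂ} (c : ℂ) (hf : Good S n b f) :
    Good S n b (fun k => c * f k) := by
  obtain ⟨K, q, h⟩ := hf
  refine ⟨K, fun i idx => C c * q i idx, fun i hi j hj => ?_⟩
  beta_reduce
  rw [h i hi j hj, Finset.mul_sum]
  congr 1; ext idx; simp; ring

lemma good_sum {S n : ℕ} {b : ℕ → ℂ} {ι : Type*} (s : Finset ι) (F : ι → ℕ → ℂ)
    (h : ∀ x ∈ s, Good S n b (F x)) : Good S n b (fun k => ∑ x ∈ s, F x k) := by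
  classical
  induction s using Finset.induction_on with
  | empty => simpa using good_zero S n b
  | @insert x s hx ih =>
    simp only [Finset.sum_insert hx]
    exact good_add (h x (Finset.mem_insert_self x s))
      (ih fun y hy => h y (Finset.mem_insert_of_mem hy))

lemma good_reindex {S n n' : ℕ} {b b' : ℕ → ℂ} {g : ℕ → ℂ} (hg : Good S n b g)
    (h : ∀ idx < n, ∃ idx' < n', b idx = b' idx') : Good S n' b' g := by
  classical
  obtain ⟨K, q, hq⟩ := hg
  set σ : ℕ → ℕ := fun idx => if h' : idx < n then (h idx h').choose else 0 with hσ
  have hσlt : ∀ idx < n, σ idx < n' ∧ b idx = b' (σ idx) := by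
    intro idx hidx
    rw [hσ]; simp only [dif_pos hidx]
    exact ⟨(h idx hidx).choose_spec.1, (h idx hidx).choose_spec.2⟩
  refine ⟨K, fun i idx' => ∑ idx ∈ (Finset.range n).filter (fun idx => σ idx = idx'),
    q i idx, fun i hi j hj => ?_⟩
  rw [hq i hi j hj]
  rw [← Finset.sum_fiberwise_of_maps_to (g := σ) (t := Finset.range n')
    (fun idx hidx => Finset.mem_range.2 (hσlt idx (Finset.mem_range.1 hidx)).1)
    (fun idx => (q i idx).eval (j : ℂ) * (b idx) ^ j)]
  congr 1
  ext idx'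
  rw [Polynomial.eval_finset_sum, Finset.sum_mul]
  refine Finset.sum_congr rfl fun idx hidx => ?_
  rw [Finset.mem_filter, Finset.mem_range] at hidx
  rw [← hidx.2, ← (hσlt idx hidx.1).2]

lemma good_shift {S n : ℕ} {b f : ℕ → ℂ} (hS : 0 < S) (a : ℕ) (hf : Good S n b f) :
    Good S n b (fun k => f (k - a)) := by
  obtain ⟨K, q, hq⟩ := hf
  refine ⟨K + a + 1, fun i idx =>
    (if b idx = 0 then 0 else
      C ((b idx) ^ ((a * (S - 1) + i) / S) * ((b idx)⁻¹) ^ a) *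
        (q ((a * (S - 1) + i) % S) idx).comp
          (X + C ((((a * (S - 1) + i) / S : ℕ) : ℂ) - (a : ℂ)))),
    fun i hi j hj => ?_⟩
  set R := a * (S - 1) + i with hR
  set e := R / S with he
  set i'' := R % S with hi''
  have hi''S : i'' < S := Nat.mod_lt _ hS
  have heR : e * S + i'' = R := by rw [he, hi'', mul_comm]; exact Nat.div_add_mod R S
  have hkey : j * S + i - a = (j - a + e) * S + i'' := by
    have h1 : (j - a) * S = j * S - a * S := Nat.sub_mul j a S
    have h2 : a * (S - 1) = a * S - a := by
      rw [Nat.mul_sub, mul_one]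
    have h3 : a ≤ a * S := Nat.le_mul_of_pos_right a hS
    have h4 : a * S ≤ j * S := Nat.mul_le_mul_right S (by omega)
    have hA : (j - a + e) * S = j * S - a * S + e * S := by
      rw [Nat.add_mul, h1]
    have h5 : e * S + i'' = a * (S - 1) + i := by rw [heR, hR]
    rw [hA]
    omega
  have hj' : K + 1 ≤ j - a + e := le_trans (by omega) (Nat.le_add_right _ e)
  beta_reduce
  rw [hkey, hq i'' hi''S (j - a + e) (by omega)]
  refine Finset.sum_congr rfl fun idx _ => ?_
  by_cases hb : b idx = 0
  · rw [hb, if_pos rfl]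
    rw [zero_pow (show j - a + e ≠ 0 by omega)]
    simp
  · rw [if_neg hb]
    simp only [Polynomial.eval_mul, Polynomial.eval_C, Polynomial.eval_comp,
      Polynomial.eval_add, Polynomial.eval_X]
    have hcast : ((j : ℂ)) + ((((e : ℕ)) : ℂ) - (a : ℂ)) = ((j - a + e : ℕ) : ℂ) := by
      have : a ≤ j := by omega
      push_cast [Nat.cast_sub this]
      ring
    rw [hcast]
    have hpow2 : (b idx) ^ (j - a + e) = (b idx) ^ e * ((b idx)⁻¹) ^ a * (b idx) ^ j := by
      have h6 : j - a + e + a = e + j := by omega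
      have h7 : (b idx) ^ (j - a + e) * (b idx) ^ a = (b idx) ^ e * (b idx) ^ j := by
        rw [← pow_add, ← pow_add, h6]
      rw [inv_pow, mul_right_comm, ← h7, mul_inv_cancel_right₀ (pow_ne_zero _ hb)]
    rw [hpow2]
    ring

noncomputable def convF (f h : ℕ → ℂ) (k : ℕ) : ℂ := ∑ a ∈ Finset.range (k + 1), f a * h (k - a)

noncomputable def piece (S K i₁ : ℕ) (P : Polynomial ℂ) (β : ℂ) (k : ℕ) : ℂ :=
  if k % S = i₁ ∧ K ≤ k / S then P.eval ((k / S : ℕ) : ℂ) * β ^ (k / S) else 0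

lemma divmod_unique {S x y u v : ℕ} (hS : 0 < S) (h : x * S + u = y * S + v)
    (hu : u < S) (hv : v < S) : x = y ∧ u = v := by
  have h1 : (x * S + u) % S = u := by
    rw [add_comm, Nat.add_mul_mod_self_right, Nat.mod_eq_of_lt hu]
  have h2 : (y * S + v) % S = v := by
    rw [add_comm, Nat.add_mul_mod_self_right, Nat.mod_eq_of_lt hv]
  have huv : u = v := by rw [← h1, h, h2]
  have hxy : x * S = y * S := by omega
  exact ⟨Nat.eq_of_mul_eq_mul_right hS hxy, huv⟩

lemma divmod_cases {S x y u v : ℕ} (hS : 0 < S) (h : x * S + u = y * S + v)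
    (hu : u < 2 * S) (hv : v < S) : (x = y ∧ u = v) ∨ (y = x + 1 ∧ u = v + S) := by
  rcases Nat.lt_or_ge u S with h1 | h1
  · exact Or.inl (divmod_unique hS h h1 hv)
  · right
    have h3 : (x + 1) * S + (u - S) = y * S + v := by
      rw [Nat.add_mul, one_mul]; omega
    obtain ⟨hxy, huv⟩ := divmod_unique hS h3 (by omega) hv
    exact ⟨hxy.symm, by omega⟩

lemma mod_div_of_form {S j i : ℕ} (hS : 0 < S) (hi : i < S) :
    (j * S + i) % S = i ∧ (j * S + i) / S = j := by
  constructor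
  · rw [add_comm, Nat.add_mul_mod_self_right, Nat.mod_eq_of_lt hi]
  · rw [mul_comm, Nat.mul_add_div hS, Nat.div_eq_of_lt hi, add_zero]

lemma good_piece {S : ℕ} (hS : 0 < S) (K i₁ : ℕ) (P : Polynomial ℂ) (β : ℂ) :
    Good S 1 (fun _ => β) (piece S K i₁ P β) := by
  refine ⟨K, fun i _ => if i = i₁ then P else 0, fun i hi j hj => ?_⟩
  obtain ⟨hmod, hdiv⟩ := mod_div_of_form (j := j) hS hi
  unfold piece
  rw [Finset.sum_range_one, hmod, hdiv]
  beta_reduce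
  by_cases hii : i = i₁
  · rw [if_pos ⟨hii, hj⟩, if_pos hii]
  · rw [if_neg (fun hc => hii hc.1), if_neg hii]
    simp

lemma pow_shift_eval (β A : ℂ) (r : Polynomial ℂ) (c j : ℕ) (hj : c + 1 ≤ j) :
    A * (r.eval ((j - c : ℕ) : ℂ) * β ^ (j - c)) =
    (if β = 0 then 0 else C (A * (β⁻¹) ^ c) * r.comp (X - C (c : ℂ))).eval (j : ℂ)
      * β ^ j := by
  by_cases hb : β = 0
  · rw [if_pos hb, hb, zero_pow (show j - c ≠ 0 by omega)]
    simp
  · rw [if_neg hb]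
    simp only [Polynomial.eval_mul, Polynomial.eval_C, Polynomial.eval_comp,
      Polynomial.eval_sub, Polynomial.eval_X]
    have hcast : (j : ℂ) - (c : ℂ) = ((j - c : ℕ) : ℂ) := by
      push_cast [Nat.cast_sub (show c ≤ j by omega)]; ring
    rw [hcast]
    have hpow : β ^ (j - c) = β⁻¹ ^ c * β ^ j := by
      have h7 : β ^ (j - c) * β ^ c = β ^ j := by
        rw [← pow_add]; congr 1; omega
      rw [inv_pow, mul_comm, ← h7, mul_inv_cancel_right₀ (pow_ne_zero _ hb)]
    rw [hpow]
    ring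

/-- Main term computation for the convolution of two pieces. -/
lemma conv_piece_sum {S : ℕ} (hS : 0 < S) {i₁ i₂ i : ℕ} (hi₁ : i₁ < S) (hi₂ : i₂ < S)
    (hi : i < S) (K₁ K₂ : ℕ) (P Q : Polynomial ℂ) (β γ : ℂ) (j M : ℕ)
    (hcase : (i₁ + i₂ = i ∧ j = K₁ + K₂ + M) ∨ (i₁ + i₂ = i + S ∧ j = K₁ + K₂ + 1 + M)) :
    convF (piece S K₁ i₁ P β) (piece S K₂ i₂ Q γ) (j * S + i) =
      β ^ K₁ * γ ^ K₂ *
        cF β γ (P.comp (X + C (K₁ : ℂ))) (Q.comp (X + C (K₂ : ℂ))) M := by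
  set k := j * S + i with hk
  have hkk : k = (K₁ + K₂ + M) * S + (i₁ + i₂) := by
    rcases hcase with ⟨h1, h2⟩ | ⟨h1, h2⟩
    · rw [hk, h1, h2]
    · rw [hk, h1, h2]
      have : (K₁ + K₂ + 1 + M) * S = (K₁ + K₂ + M) * S + S := by ring
      rw [this]; omega
  set e : ℕ → ℕ := fun u => (K₁ + u) * S + i₁ with he
  have hkey : ∀ u, u ≤ M → e u ≤ k ∧ k - e u = (K₂ + (M - u)) * S + i₂ := by
    intro u hu
    have hsplit : (K₁ + u) * S + (K₂ + (M - u)) * S = (K₁ + K₂ + M) * S := by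
      rw [← Nat.add_mul]
      congr 1
      omega
    constructor
    · rw [he, hkk]; simp only []
      omega
    · rw [he, hkk]; simp only []
      omega
  have hstep1 : convF (piece S K₁ i₁ P β) (piece S K₂ i₂ Q γ) k =
      ∑ a ∈ (Finset.range (M + 1)).image e,
        piece S K₁ i₁ P β a * piece S K₂ i₂ Q γ (k - a) := by
    unfold convF
    refine (Finset.sum_subset ?_ ?_).symm
    · intro a ha
      rw [Finset.mem_image] at ha
      obtain ⟨u, hu, rfl⟩ := ha
      rw [Finset.mem_range] at hu
      exact Finset.mem_range.2 (by have := (hkey u (by omega)).1; omega)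
    · intro a ha hna
      rw [Finset.mem_range] at ha
      unfold piece
      by_cases hF : a % S = i₁ ∧ K₁ ≤ a / S
      · by_cases hH : (k - a) % S = i₂ ∧ K₂ ≤ (k - a) / S
        · exfalso
          apply hna
          have hadec : (a / S) * S + i₁ = a := by
            rw [← hF.1]; rw [mul_comm]; exact Nat.div_add_mod a S
          have hkadec : ((k - a) / S) * S + i₂ = k - a := by
            rw [← hH.1]; rw [mul_comm]; exact Nat.div_add_mod (k - a) S
          have hsum : (a / S + (k - a) / S) * S + (i₁ + i₂) = (K₁ + K₂ + M) * S + (i₁ + i₂) := by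
            rw [Nat.add_mul, ← hkk]
            omega
          have hXY : a / S + (k - a) / S = K₁ + K₂ + M := by
            have h9 : (a / S + (k - a) / S) * S = (K₁ + K₂ + M) * S := by omega
            exact Nat.eq_of_mul_eq_mul_right hS h9
          refine Finset.mem_image.2 ⟨a / S - K₁, Finset.mem_range.2 (by omega), ?_⟩
          rw [he]; simp only []
          have : K₁ + (a / S - K₁) = a / S := by omega
          rw [this, hadec]
        · rw [if_neg hH]; ring
      · rw [if_neg hF]; ring
  rw [hstep1, Finset.sum_image (by
    intro u _ u' _ huu
    rw [he] at huu; simp only [] at huu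
    have : (K₁ + u) * S = (K₁ + u') * S := by omega
    have := Nat.eq_of_mul_eq_mul_right hS this
    omega)]
  unfold cF
  rw [Finset.mul_sum]
  refine Finset.sum_congr rfl fun u hu => ?_
  rw [Finset.mem_range] at hu
  have hu' : u ≤ M := by omega
  obtain ⟨heu_le, heu⟩ := hkey u hu'
  obtain ⟨hmod1, hdiv1⟩ := mod_div_of_form (j := K₁ + u) hS hi₁
  obtain ⟨hmod2, hdiv2⟩ := mod_div_of_form (j := K₂ + (M - u)) hS hi₂
  unfold piece
  rw [he]; simp only []
  rw [heu]
  rw [hmod1, hdiv1, hmod2, hdiv2]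
  rw [if_pos ⟨rfl, by omega⟩, if_pos ⟨rfl, by omega⟩]
  simp only [Polynomial.eval_comp, Polynomial.eval_add, Polynomial.eval_X, Polynomial.eval_C]
  rw [pow_add, pow_add]
  push_cast
  ring

lemma conv_piece_zero {S : ℕ} (hS : 0 < S) {i₁ i₂ i : ℕ} (hi : i < S)
    (K₁ K₂ : ℕ) (P Q : Polynomial ℂ) (β γ : ℂ) (j : ℕ)
    (hne : i₁ + i₂ ≠ i) (hne' : i₁ + i₂ ≠ i + S) (hii₁ : i₁ < S) (hii₂ : i₂ < S) :
    convF (piece S K₁ i₁ P β) (piece S K₂ i₂ Q γ) (j * S + i) = 0 := by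
  unfold convF
  refine Finset.sum_eq_zero fun a ha => ?_
  rw [Finset.mem_range] at ha
  set k := j * S + i with hk
  unfold piece
  by_cases hF : a % S = i₁ ∧ K₁ ≤ a / S
  · by_cases hH : (k - a) % S = i₂ ∧ K₂ ≤ (k - a) / S
    · exfalso
      have hadec : (a / S) * S + i₁ = a := by
        rw [← hF.1, mul_comm]; exact Nat.div_add_mod a S
      have hkadec : ((k - a) / S) * S + i₂ = k - a := by
        rw [← hH.1, mul_comm]; exact Nat.div_add_mod (k - a) S
      have hsum : (a / S + (k - a) / S) * S + (i₁ + i₂) = j * S + i := by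
        rw [Nat.add_mul]
        omega
      rcases divmod_cases hS hsum (by omega) hi with ⟨_, h2⟩ | ⟨_, h2⟩
      · exact hne h2
      · exact hne' h2
    · rw [if_neg hH]; ring
  · rw [if_neg hF]; ring

lemma good_conv_piece {S : ℕ} (hS : 0 < S) {i₁ i₂ : ℕ} (hi₁ : i₁ < S) (hi₂ : i₂ < S)
    (K₁ K₂ : ℕ) (P Q : Polynomial ℂ) (β γ : ℂ) :
    Good S 2 (fun idx => if idx = 0 then β else γ)
      (convF (piece S K₁ i₁ P β) (piece S K₂ i₂ Q γ)) := by
  obtain ⟨r, s, hrs⟩ :=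
    conv_polyexp β γ (P.comp (X + C (K₁ : ℂ))) (Q.comp (X + C (K₂ : ℂ)))
  set A : ℂ := β ^ K₁ * γ ^ K₂ with hA
  refine ⟨K₁ + K₂ + 2, fun i idx =>
    if i₁ + i₂ = i ∨ i₁ + i₂ = i + S then
      (if idx = 0 then
         (if β = 0 then 0 else
           C (A * (β⁻¹) ^ (if i₁ + i₂ = i then K₁ + K₂ else K₁ + K₂ + 1)) *
             r.comp (X - C (((if i₁ + i₂ = i then K₁ + K₂ else K₁ + K₂ + 1) : ℕ) : ℂ)))
       else
         (if γ = 0 then 0 else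
           C (A * (γ⁻¹) ^ (if i₁ + i₂ = i then K₁ + K₂ else K₁ + K₂ + 1)) *
             s.comp (X - C (((if i₁ + i₂ = i then K₁ + K₂ else K₁ + K₂ + 1) : ℕ) : ℂ))))
    else 0, fun i hi j hj => ?_⟩
  rw [Finset.sum_range_succ, Finset.sum_range_one]
  beta_reduce
  by_cases hc : i₁ + i₂ = i ∨ i₁ + i₂ = i + S
  · set c : ℕ := if i₁ + i₂ = i then K₁ + K₂ else K₁ + K₂ + 1 with hcdef
    have hcle : c + 1 ≤ j := by
      rw [hcdef]; split <;> omega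
    have hM : (i₁ + i₂ = i ∧ j = K₁ + K₂ + (j - c)) ∨
        (i₁ + i₂ = i + S ∧ j = K₁ + K₂ + 1 + (j - c)) := by
      rcases hc with h | h
      · left; refine ⟨h, ?_⟩; rw [hcdef, if_pos h] at hcle ⊢; omega
      · right; refine ⟨h, ?_⟩
        have hne : ¬ i₁ + i₂ = i := by omega
        rw [hcdef, if_neg hne] at hcle ⊢; omega
    rw [conv_piece_sum hS hi₁ hi₂ hi K₁ K₂ P Q β γ j (j - c) hM, hrs (j - c), ← hA]
    simp only [if_pos hc, reduceIte]
    rw [mul_add]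
    rw [pow_shift_eval β A r c j hcle, pow_shift_eval γ A s c j hcle]
    norm_num
  · push_neg at hc
    rw [conv_piece_zero hS hi K₁ K₂ P Q β γ j hc.1 hc.2 hi₁ hi₂]
    have : ¬ (i₁ + i₂ = i ∨ i₁ + i₂ = i + S) := by push_neg; exact hc
    simp only [if_neg this]
    simp

lemma good_eq {S n : ℕ} {b g g' : ℕ → ℂ} (h : ∀ k, g k = g' k) (hg : Good S n b g) :
    Good S n b g' := by
  have : g = g' := funext h
  rwa [← this]

lemma convF_comm (f h : ℕ → ℂ) (k : ℕ) : convF f h k = convF h f k := by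
  unfold convF
  rw [← Finset.sum_range_reflect]
  refine Finset.sum_congr rfl fun a ha => ?_
  rw [Finset.mem_range] at ha
  have h1 : k + 1 - 1 - a = k - a := by omega
  have h2 : k - (k - a) = a := by omega
  rw [h1, h2, mul_comm]

lemma convF_sum_left {ι : Type} (s : Finset ι) (u : ι → ℕ → ℂ) (h : ℕ → ℂ) (k : ℕ) :
    convF (fun x => ∑ y ∈ s, u y x) h k = ∑ y ∈ s, convF (u y) h k := by
  unfold convF
  rw [Finset.sum_comm]
  refine Finset.sum_congr rfl fun a _ => ?_
  rw [Finset.sum_mul]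

lemma convF_sum_right {ι : Type} (s : Finset ι) (u : ι → ℕ → ℂ) (f : ℕ → ℂ) (k : ℕ) :
    convF f (fun x => ∑ y ∈ s, u y x) k = ∑ y ∈ s, convF f (u y) k := by
  unfold convF
  rw [Finset.sum_comm]
  refine Finset.sum_congr rfl fun a _ => ?_
  rw [Finset.mul_sum]

lemma convF_split_right (f h u v : ℕ → ℂ) (huv : ∀ x, h x = u x + v x) (k : ℕ) :
    convF f h k = convF f u k + convF f v k := by
  unfold convF
  rw [← Finset.sum_add_distrib]
  refine Finset.sum_congr rfl fun a _ => ?_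
  rw [huv (k - a)]
  ring

lemma convF_split_left (f g u v : ℕ → ℂ) (huv : ∀ x, f x = u x + v x) (k : ℕ) :
    convF f g k = convF u g k + convF v g k := by
  unfold convF
  rw [← Finset.sum_add_distrib]
  refine Finset.sum_congr rfl fun a _ => ?_
  rw [huv a]
  ring

/-- On `k ≥ K*S`, a `Good` representation gives an exact pieces decomposition. -/
lemma pieces_eval {S : ℕ} (hS : 0 < S) (K : ℕ) (q : ℕ → ℕ → Polynomial ℂ)
    (b : ℕ → ℂ) (n : ℕ) (g : ℕ → ℂ)
    (hg : ∀ i < S, ∀ j : ℕ, K ≤ j →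
      g (j * S + i) = ∑ idx ∈ Finset.range n, (q i idx).eval (j : ℂ) * (b idx) ^ j)
    (k : ℕ) (hk : K * S ≤ k) :
    g k = ∑ p ∈ Finset.range S ×ˢ Finset.range n,
      piece S K p.1 (q p.1 p.2) (b p.2) k := by
  have hj : K ≤ k / S := (Nat.le_div_iff_mul_le hS).2 hk
  have hkdec : (k / S) * S + k % S = k := by
    rw [mul_comm]; exact Nat.div_add_mod k S
  have hmod : k % S < S := Nat.mod_lt _ hS
  rw [Finset.sum_product]
  rw [Finset.sum_eq_single_of_mem (k % S) (Finset.mem_range.2 hmod)]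
  · have h1 : ∀ idx ∈ Finset.range n, piece S K (k % S) (q (k % S) idx) (b idx) k =
        (q (k % S) idx).eval ((k / S : ℕ) : ℂ) * (b idx) ^ (k / S) := by
      intro idx _
      unfold piece
      rw [if_pos ⟨rfl, hj⟩]
    rw [Finset.sum_congr rfl h1, ← hg (k % S) hmod (k / S) hj, hkdec]
  · intro i₁ _ hne
    refine Finset.sum_eq_zero fun idx _ => ?_
    unfold piece
    rw [if_neg (fun hc => hne (hc.1.symm))]

lemma good_conv {S n₁ n₂ : ℕ} {b₁ b₂ : ℕ → ℂ} {f h : ℕ → ℂ} (hS : 0 < S)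
    (hf : Good S n₁ b₁ f) (hh : Good S n₂ b₂ h) :
    Good S (n₁ + n₂) (fun idx => if idx < n₁ then b₁ idx else b₂ (idx - n₁))
      (convF f h) := by
  classical
  obtain ⟨K₁, q₁, hq₁⟩ := hf
  obtain ⟨K₂, q₂, hq₂⟩ := hh
  set b' : ℕ → ℂ := fun idx => if idx < n₁ then b₁ idx else b₂ (idx - n₁) with hb'
  have hre1 : ∀ idx < n₁, ∃ idx' < n₁ + n₂, b₁ idx = b' idx' := by
    intro idx hidx
    exact ⟨idx, by omega, by rw [hb']; simp only [if_pos hidx]⟩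
  have hre2 : ∀ idx < n₂, ∃ idx' < n₁ + n₂, b₂ idx = b' idx' := by
    intro idx hidx
    refine ⟨n₁ + idx, by omega, ?_⟩
    rw [hb']; simp only [if_neg (by omega : ¬ n₁ + idx < n₁)]
    congr 1
    omega
  set f' : ℕ → ℂ := fun k => ∑ p ∈ Finset.range S ×ˢ Finset.range n₁,
    piece S K₁ p.1 (q₁ p.1 p.2) (b₁ p.2) k with hf'
  set h' : ℕ → ℂ := fun k => ∑ p ∈ Finset.range S ×ˢ Finset.range n₂,
    piece S K₂ p.1 (q₂ p.1 p.2) (b₂ p.2) k with hh'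
  have hfev : ∀ k, K₁ * S ≤ k → f k = f' k := fun k hk =>
    pieces_eval hS K₁ q₁ b₁ n₁ f hq₁ k hk
  have hhev : ∀ k, K₂ * S ≤ k → h k = h' k := fun k hk =>
    pieces_eval hS K₂ q₂ b₂ n₂ h hq₂ k hk
  -- Good for convolution of a piece with h
  have hpiececonv : ∀ i₁ < S, ∀ idx₁ < n₁,
      Good S (n₁ + n₂) b' (convF (piece S K₁ i₁ (q₁ i₁ idx₁) (b₁ idx₁)) h) := by
    intro i₁ hi₁ idx₁ hidx₁
    set Fp := piece S K₁ i₁ (q₁ i₁ idx₁) (b₁ idx₁) with hFpd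
    have hdec : ∀ k, (∑ p ∈ Finset.range S ×ˢ Finset.range n₂,
          convF Fp (piece S K₂ p.1 (q₂ p.1 p.2) (b₂ p.2)) k)
        + convF (fun x => h x - h' x) Fp k = convF Fp h k := by
      intro k
      rw [convF_split_right Fp h h' (fun x => h x - h' x) (fun x => by ring) k]
      rw [convF_comm (fun x => h x - h' x) Fp]
      congr 1
      rw [hh', convF_sum_right]
    refine good_eq hdec (good_add ?_ ?_)
    · refine good_sum _ _ fun p hp => ?_
      rw [Finset.mem_product, Finset.mem_range, Finset.mem_range] at hp
      refine good_reindex (good_conv_piece hS hi₁ hp.1 K₁ K₂ _ _ _ _) ?_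
      intro id hid
      interval_cases id
      · exact ⟨idx₁, by omega, by simp [hb', hidx₁]⟩
      · refine ⟨n₁ + p.2, by omega, ?_⟩
        simp [hb', (by omega : ¬ n₁ + p.2 < n₁)]
    · refine good_congr hS (good_sum (Finset.range (K₂ * S))
        (fun a => fun k => (h a - h' a) * Fp (k - a)) fun a _ => ?_) ?_
      · exact good_reindex (good_smul _ (good_shift hS a (good_piece hS K₁ i₁ _ _)))
          (fun idx hidx => hre1 idx₁ hidx₁)
      · refine ⟨K₂ * S, fun k hk => ?_⟩
        show (∑ a ∈ Finset.range (K₂ * S), (h a - h' a) * Fp (k - a)) =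
          convF (fun x => h x - h' x) Fp k
        unfold convF
        refine Finset.sum_subset (Finset.range_subset_range.2 (by omega)) ?_
        intro a ha hna
        rw [Finset.mem_range] at ha hna
        beta_reduce
        rw [hhev a (by omega)]
        ring
  -- decompose convF f h
  have hsplit : ∀ k, (∑ p ∈ Finset.range S ×ˢ Finset.range n₁,
        convF (piece S K₁ p.1 (q₁ p.1 p.2) (b₁ p.2)) h k)
      + convF (fun x => f x - f' x) h k = convF f h k := by
    intro k
    rw [convF_split_left f h f' (fun x => f x - f' x) (fun x => by ring) k]
    congr 1
    rw [hf', convF_sum_left]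
  refine good_eq hsplit (good_add ?_ ?_)
  · refine good_sum _ _ fun p hp => ?_
    rw [Finset.mem_product, Finset.mem_range, Finset.mem_range] at hp
    exact hpiececonv p.1 hp.1 p.2 hp.2
  · refine good_congr hS (good_sum (Finset.range (K₁ * S))
      (fun a => fun k => (f a - f' a) * h (k - a)) fun a _ => ?_) ?_
    · exact good_reindex (good_smul _ (good_shift hS a (⟨K₂, q₂, hq₂⟩ : Good S n₂ b₂ h))) hre2
    · refine ⟨K₁ * S, fun k hk => ?_⟩
      show (∑ a ∈ Finset.range (K₁ * S), (f a - f' a) * h (k - a)) =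
        convF (fun x => f x - f' x) h k
      unfold convF
      refine Finset.sum_subset (Finset.range_subset_range.2 (by omega)) ?_
      intro a ha hna
      rw [Finset.mem_range] at ha hna
      beta_reduce
      rw [hfev a (by omega)]
      ring

lemma list_sum_eq (l : List ℂ) (ψ : ℂ → ℂ) :
    (l.map ψ).sum = ∑ idx ∈ Finset.range l.length, ψ (l.getD idx 0) := by
  induction l with
  | nil => simp
  | cons c l ih =>
    rw [List.map_cons, List.sum_cons, List.length_cons, Finset.sum_range_succ', ih]
    simp [add_comm]

lemma good_base {S m : ℕ} (hS : 0 < S) (hm : 0 < m) (hmS : m ∣ S) {L : Finset ℂ}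
    {g : ℕ → ℂ} (hg : IsPolyexp L g) :
    Good S L.toList.length (fun idx => (L.toList.getD idx 0) ^ (S / m))
      (fun k => if m ∣ k then g (k / m) else 0) := by
  obtain ⟨p, hp⟩ := hg
  refine ⟨0, fun i idx => if m ∣ i then
      C ((L.toList.getD idx 0) ^ (i / m)) *
        (p (L.toList.getD idx 0)).comp (C (((S / m : ℕ)) : ℂ) * X + C (((i / m : ℕ)) : ℂ))
    else 0, fun i hi j _ => ?_⟩
  beta_reduce
  have hjS : m ∣ j * S := Dvd.dvd.mul_left hmS j
  by_cases hdvd : m ∣ i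
  · have hkd : m ∣ j * S + i := Nat.dvd_add hjS hdvd
    rw [if_pos hkd]
    have hdiv : (j * S + i) / m = j * (S / m) + i / m := by
      have h1 : j * S + i = (j * (S / m) + i / m) * m := by
        rw [Nat.add_mul, mul_assoc, Nat.div_mul_cancel hmS, Nat.div_mul_cancel hdvd]
      rw [h1, Nat.mul_div_cancel _ hm]
    rw [hdiv, hp]
    rw [← Finset.sum_map_toList L
      (fun c => (p c).eval (((j * (S / m) + i / m : ℕ)) : ℂ) * c ^ (j * (S / m) + i / m))]
    rw [list_sum_eq]
    refine Finset.sum_congr rfl fun idx _ => ?_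
    set c := L.toList.getD idx 0 with hc
    rw [if_pos hdvd]
    simp only [Polynomial.eval_mul, Polynomial.eval_C, Polynomial.eval_comp,
      Polynomial.eval_add, Polynomial.eval_X]
    have hpowsplit : c ^ (j * (S / m) + i / m) = (c ^ (S / m)) ^ j * c ^ (i / m) := by
      rw [pow_add]
      congr 1
      rw [mul_comm j (S / m), pow_mul]
    rw [hpowsplit]
    push_cast
    ring
  · have hnd : ¬ m ∣ (j * S + i) := by
      intro hc
      exact hdvd ((Nat.dvd_add_right hjS).mp hc)
    rw [if_neg hnd]
    symm
    refine Finset.sum_eq_zero fun idx _ => ?_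
    rw [if_neg hdvd]
    simp

lemma wc_zero (g : Fin 0 → ℕ → ℂ) (m : Fin 0 → ℕ) (k : ℕ) :
    weightedConv 0 g m k = if k = 0 then 1 else 0 := by
  unfold weightedConv
  by_cases hk : k = 0
  · subst hk
    rw [if_pos rfl]
    rw [Finset.filter_true_of_mem (fun v _ => by simp)]
    simp [Fintype.card_piFinset]
  · rw [if_neg hk]
    rw [Finset.filter_false_of_mem (fun v _ => by simp [Ne.symm hk])]
    simp

lemma sum_multiples (m N : ℕ) (hm : 0 < m) (ψ : ℕ → ℂ) :
    ∑ a ∈ Finset.range (N + 1), (if m ∣ a then ψ a else 0)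
      = ∑ u ∈ Finset.range (N / m + 1), ψ (m * u) := by
  classical
  rw [← Finset.sum_filter]
  have hset : (Finset.range (N + 1)).filter (fun a => m ∣ a)
      = (Finset.range (N / m + 1)).image (fun u => m * u) := by
    ext a
    simp only [Finset.mem_filter, Finset.mem_range, Finset.mem_image]
    constructor
    · rintro ⟨ha, u, rfl⟩
      refine ⟨u, ?_, rfl⟩
      have hmu : u * m ≤ N := by rw [Nat.mul_comm]; omega
      have h1 := (Nat.le_div_iff_mul_le hm).2 hmu
      omega
    · rintro ⟨u, hu, rfl⟩
      have h1 : m * u ≤ m * (N / m) := Nat.mul_le_mul_left m (by omega)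
      have h2 : m * (N / m) ≤ N := Nat.mul_div_le N m
      exact ⟨by omega, ⟨u, rfl⟩⟩
  rw [hset, Finset.sum_image (fun u _ u' _ h => Nat.eq_of_mul_eq_mul_left hm h)]

lemma wc_succ (t : ℕ) (g : Fin (t + 1) → ℕ → ℂ) (m : Fin (t + 1) → ℕ)
    (hm : ∀ i, 0 < m i) (k : ℕ) :
    weightedConv (t + 1) g m k = ∑ a ∈ Finset.range (k + 1),
      (if m 0 ∣ a then g 0 (a / m 0) else 0) *
        weightedConv t (fun i => g i.succ) (fun i => m i.succ) (k - a) := by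
  classical
  have hrw : ∀ a, (if m 0 ∣ a then g 0 (a / m 0) else 0) *
      weightedConv t (fun i => g i.succ) (fun i => m i.succ) (k - a)
      = if m 0 ∣ a then g 0 (a / m 0) *
          weightedConv t (fun i => g i.succ) (fun i => m i.succ) (k - a) else 0 := by
    intro a; split <;> simp
  rw [Finset.sum_congr rfl (fun a _ => hrw a),
    sum_multiples (m 0) k (hm 0)
      (fun a => g 0 (a / m 0) * weightedConv t (fun i => g i.succ) (fun i => m i.succ) (k - a))]
  have hsimp : ∀ u, g 0 (m 0 * u / m 0) = g 0 u := fun u => by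
    rw [Nat.mul_div_cancel_left u (hm 0)]
  simp only [hsimp]
  -- unfold the inner weightedConv and push the factor inside
  unfold weightedConv
  have hrhs : ∀ u, g 0 u * ∑ w ∈ (Fintype.piFinset fun _ : Fin t =>
        Finset.range (k - m 0 * u + 1)).filter
        (fun w : Fin t → ℕ => ∑ i, m i.succ * w i = k - m 0 * u),
      ∏ i, g i.succ (w i)
      = ∑ w ∈ (Fintype.piFinset fun _ : Fin t =>
        Finset.range (k - m 0 * u + 1)).filter
        (fun w : Fin t → ℕ => ∑ i, m i.succ * w i = k - m 0 * u),
      g 0 u * ∏ i, g i.succ (w i) := by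
    intro u; rw [Finset.mul_sum]
  rw [Finset.sum_congr rfl fun u _ => hrhs u]
  rw [← Finset.sum_sigma (Finset.range (k / m 0 + 1))
    (fun u => (Fintype.piFinset fun _ : Fin t => Finset.range (k - m 0 * u + 1)).filter
        (fun w : Fin t → ℕ => ∑ i, m i.succ * w i = k - m 0 * u))
    (fun x => g 0 x.1 * ∏ i, g i.succ (x.2 i))]
  refine Finset.sum_bij' (fun v _ => (⟨v 0, Fin.tail v⟩ : Σ _ : ℕ, (Fin t → ℕ)))
    (fun x _ => Fin.cons x.1 x.2) ?_ ?_ ?_ ?_ ?_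
  · -- forward membership
    intro v hv
    rw [Finset.mem_filter, Fintype.mem_piFinset] at hv
    obtain ⟨hmem, hsum⟩ := hv
    rw [Fin.sum_univ_succ] at hsum
    have hnn : m 0 * v 0 ≤ k := Nat.le.intro hsum
    rw [Finset.mem_sigma]
    constructor
    · rw [Finset.mem_range]
      show v 0 < k / m 0 + 1
      have h5 : v 0 * m 0 ≤ k := by rw [Nat.mul_comm]; exact hnn
      have := (Nat.le_div_iff_mul_le (hm 0)).2 h5
      omega
    · rw [Finset.mem_filter, Fintype.mem_piFinset]
      constructor
      · intro i
        rw [Finset.mem_range]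
        show v i.succ < k - m 0 * v 0 + 1
        have h1 : m i.succ * v i.succ ≤ ∑ i' : Fin t, m i'.succ * v i'.succ :=
          Finset.single_le_sum (f := fun i' : Fin t => m i'.succ * v i'.succ)
            (fun _ _ => Nat.zero_le _) (Finset.mem_univ i)
        have h2 : v i.succ ≤ m i.succ * v i.succ :=
          Nat.le_mul_of_pos_left _ (hm i.succ)
        omega
      · show (∑ i : Fin t, m i.succ * v i.succ) = k - m 0 * v 0
        omega
  · -- backward membership
    rintro ⟨u, w⟩ hx
    rw [Finset.mem_sigma, Finset.mem_range, Finset.mem_filter, Fintype.mem_piFinset] at hx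
    obtain ⟨hu, hw, hwsum⟩ := hx
    dsimp only at hu hw hwsum ⊢
    have hmu : m 0 * u ≤ k := by
      rw [mul_comm]
      exact (Nat.le_div_iff_mul_le (hm 0)).1 (by omega)
    rw [Finset.mem_filter, Fintype.mem_piFinset]
    constructor
    · intro i
      rw [Finset.mem_range]
      refine Fin.cases ?_ ?_ i
      · rw [Fin.cons_zero]
        have : u ≤ m 0 * u := Nat.le_mul_of_pos_left _ (hm 0)
        omega
      · intro i'
        rw [Fin.cons_succ]
        have := Finset.mem_range.1 (hw i')
        omega
    · rw [Fin.sum_univ_succ]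
      simp only [Fin.cons_zero, Fin.cons_succ]
      omega
  · intro v hv
    exact Fin.cons_self_tail v
  · rintro ⟨u, w⟩ hx
    dsimp only
    simp only [Fin.cons_zero, Fin.tail_cons]
  · intro v hv
    rw [Fin.prod_univ_succ]
    rfl

lemma good_wc (t : ℕ) : ∀ (L : Finset ℂ) (g : Fin t → ℕ → ℂ),
    (∀ i, IsPolyexp L (g i)) →
    ∀ (m : Fin t → ℕ), (∀ i, 0 < m i) → ∀ S, 0 < S → (∀ i, m i ∣ S) →
    ∃ n : ℕ, ∃ b : ℕ → ℂ,
      (∀ idx < n, ∃ i : Fin t, ∃ ℓ ∈ L, b idx = ℓ ^ (S / m i)) ∧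
      Good S n b (weightedConv t g m) := by
  induction t with
  | zero =>
    intro L g hg m hm S hS hdvd
    refine ⟨0, fun _ => 0, fun idx h => absurd h (by omega), good_ev_zero hS ⟨1, fun k hk => ?_⟩⟩
    rw [wc_zero, if_neg (by omega)]
  | succ t ih =>
    intro L g hg m hm S hS hdvd
    obtain ⟨n₂, b₂, hb₂, hgood₂⟩ := ih L (fun i => g i.succ) (fun i => hg i.succ)
      (fun i => m i.succ) (fun i => hm i.succ) S hS (fun i => hdvd i.succ)
    have h1 := good_base hS (hm 0) (hdvd 0) (hg 0)
    have hconv := good_conv hS h1 hgood₂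
    set n₁ := L.toList.length with hn₁
    refine ⟨n₁ + n₂, _, ?_, good_eq (fun k => ?_) hconv⟩
    · intro idx hidx
      by_cases hlt : idx < n₁
      · refine ⟨0, L.toList.getD idx 0, ?_, by simp only [if_pos hlt]⟩
        have hmem : L.toList.getD idx 0 ∈ L.toList := by
          rw [List.getD_eq_getElem _ _ hlt]
          exact List.getElem_mem _
        exact Finset.mem_toList.1 hmem
      · obtain ⟨i, ℓ, hℓ, hb⟩ := hb₂ (idx - n₁) (by omega)
        exact ⟨i.succ, ℓ, hℓ, by simp only [if_neg hlt]; exact hb⟩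
    · rw [wc_succ t g m hm k]
      unfold convF
      rfl


/-- Let `g₁, …, g_t` be polyexponentials with bases in `L`, let `m₁, …, m_t` be
positive integers and `S` their least common multiple.  Then the weighted
convolution `(g₁ * ··· * g_t)_{m⃗}` is a mod-`S` polyexponential (a finite sum of
mod-`S` polyexponentials) whose bases lie in `⋃_i L^{S/m_i}`. -/

theorem weightedConv_modPolyexp (t : ℕ) (ht : 0 < t) (L : Finset ℂ)
    (g : Fin t → ℕ → ℂ) (hg : ∀ i, IsPolyexp L (g i))
    (m : Fin t → ℕ) (hm : ∀ i, 0 < m i) (S : ℕ) (hS : S = Finset.univ.lcm m) :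
    ∃ (n : ℕ) (b : Fin n → ℂ) (f : Fin n → ℕ → ℂ),
      (∀ j, ∃ i : Fin t, ∃ ℓ ∈ L, b j = ℓ ^ (S / m i)) ∧
      (∀ j, IsModPolyexp S (b j) (f j)) ∧
      ∀ k : ℕ, weightedConv t g m k = ∑ j, f j k := by
  classical
  have hS0 : 0 < S := by
    rw [hS]
    rcases Nat.eq_zero_or_pos (Finset.univ.lcm m) with h0 | h0
    · exfalso
      rw [Finset.lcm_eq_zero_iff] at h0
      obtain ⟨i, _, hi⟩ := h0
      exact absurd hi.symm (by have := hm i; omega)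
    · exact h0
  have hdvd : ∀ i, m i ∣ S := fun i => hS ▸ Finset.dvd_lcm (Finset.mem_univ i)
  by_cases hL : L = ∅
  · refine ⟨0, (Fin.elim0 : Fin 0 → ℂ), (Fin.elim0 : Fin 0 → ℕ → ℂ), fun j => absurd j.isLt (Nat.not_lt_zero _), fun j => absurd j.isLt (Nat.not_lt_zero _), fun k => ?_⟩
    rw [Finset.univ_eq_empty, Finset.sum_empty]
    unfold weightedConv
    refine Finset.sum_eq_zero fun v _ => ?_
    have hz : g ⟨0, ht⟩ (v ⟨0, ht⟩) = 0 := by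
      obtain ⟨p, hp⟩ := hg ⟨0, ht⟩
      rw [hp, hL]
      simp
    exact Finset.prod_eq_zero (Finset.mem_univ ⟨0, ht⟩) hz
  · obtain ⟨ℓ₀, hℓ₀⟩ := Finset.nonempty_iff_ne_empty.2 hL
    obtain ⟨N, b, hbase, hgood⟩ := good_wc t L g hg m hm S hS0 hdvd
    set i0 : Fin t := ⟨0, ht⟩ with hi0
    set b' : ℕ → ℂ := fun idx => if idx < N then b idx else ℓ₀ ^ (S / m i0) with hb'
    have hgood' : Good S (N + 1) b' (weightedConv t g m) :=
      good_reindex hgood (fun idx hidx => ⟨idx, by omega, by rw [hb']; simp [hidx]⟩)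
    obtain ⟨K, q, hq⟩ := hgood'
    refine ⟨N + 1, fun j => b' (j : ℕ), fun j k =>
      if (j : ℕ) = N then
        weightedConv t g m k - ∑ idx ∈ Finset.range N,
          (q (k % S) idx).eval ((k / S : ℕ) : ℂ) * (b' idx) ^ (k / S)
      else (q (k % S) (j : ℕ)).eval ((k / S : ℕ) : ℂ) * (b' (j : ℕ)) ^ (k / S),
      ?_, ?_, ?_⟩
    · intro j
      by_cases hj : (j : ℕ) < N
      · obtain ⟨i, ℓ, hℓ, hb⟩ := hbase (j : ℕ) hj
        exact ⟨i, ℓ, hℓ, by rw [hb']; simp only [if_pos hj]; exact hb⟩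
      · exact ⟨i0, ℓ₀, hℓ₀, by rw [hb']; simp only [if_neg hj]⟩
    · intro j
      by_cases hj : (j : ℕ) = N
      · refine ⟨K * S + S, fun i => q i N, fun k hk => ?_⟩
        simp only [if_pos hj]
        have hdivK : K ≤ k / S := (Nat.le_div_iff_mul_le hS0).2 (by omega)
        have hmod : k % S < S := Nat.mod_lt _ hS0
        have hkdec : (k / S) * S + k % S = k := by
          rw [mul_comm]; exact Nat.div_add_mod k S
        have hwc := hq (k % S) hmod (k / S) hdivK
        rw [hkdec] at hwc
        rw [hwc, Finset.sum_range_succ, hj]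
        ring
      · refine ⟨0, fun i => q i (j : ℕ), fun k _ => ?_⟩
        simp only [if_neg hj]
    · intro k
      rw [Fin.sum_univ_castSucc]
      beta_reduce
      have hlastv : ((Fin.last N : Fin (N + 1)) : ℕ) = N := rfl
      rw [if_pos hlastv]
      have hcast : ∀ j : Fin N, ((Fin.castSucc j : Fin (N + 1)) : ℕ) = (j : ℕ) := fun j => rfl
      have hne : ∀ j : Fin N, ¬ (((Fin.castSucc j : Fin (N + 1)) : ℕ) = N) := by
        intro j
        rw [hcast j]
        omega
      rw [Finset.sum_congr rfl (fun j _ => if_neg (hne j))]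
      simp only [Fin.coe_castSucc]
      rw [Fin.sum_univ_eq_sum_range
        (fun idx => (q (k % S) idx).eval ((k / S : ℕ) : ℂ) * (b' idx) ^ (k / S)) N]
      ring
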